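/- Let g be a ℚ-additive function from a ℚ-linear subspace E of ℝ into ℝ with x ∉ E, and let Z ⊆ ℝ² satisfy Z ∩ graph(g) = ∅. Then the graph of the ℚ-linear extension of g determined by additionally setting value y at x is disjoint from Z if and only if (x,y) ∉ ⋃ { q·Z + (p, g(p)) : p ∈ E, q ∈ ℚ }. -/

import Mathlib

theorem stmt_10 (E : Submodule ℚ ℝ) (g : E →ₗ[ℚ] ℝ) (x y : ℝ) (hx : x ∉ E)
    (Z : Set (ℝ × ℝ))
    (hdisj : ∀ p : E, ((p : ℝ), g p) ∉ Z) :
    (∀ p : E, ∀ q : ℚ, ((p : ℝ) + (q : ℝ) * x, g p + (q : ℝ) * y) ∉ Z) ↔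
      (x, y) ∉ ⋃ (p : E) (q : ℚ),
        (fun z : ℝ × ℝ => (q : ℝ) • z + ((p : ℝ), g p)) '' Z := by
  constructor
  · intro h hmem
    simp only [Set.mem_iUnion, Set.mem_image] at hmem
    obtain ⟨p, q, z, hz, heq⟩ := hmem
    have h1 : (q : ℝ) * z.1 + (p : ℝ) = x := congrArg Prod.fst heq
    have h2 : (q : ℝ) * z.2 + g p = y := congrArg Prod.snd heq
    rcases eq_or_ne q 0 with rfl | hq
    · apply hx
      have hpx : (p : ℝ) = x := by simpa using h1
      exact hpx ▸ p.2
    · have hq' : (q : ℝ) ≠ 0 := by exact_mod_cast hq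
      apply h (-(q⁻¹ • p)) q⁻¹
      have e1 : z.1 = (x - (p : ℝ)) / (q : ℝ) := by field_simp; linarith
      have e2 : z.2 = (y - g p) / (q : ℝ) := by field_simp; linarith
      have hz1 : z.1 = (↑(-(q⁻¹ • p) : E) : ℝ) + ((q⁻¹ : ℚ) : ℝ) * x := by
        rw [e1]; push_cast; rw [Rat.smul_def]; field_simp; rw [Rat.cast_div, Rat.cast_one, mul_assoc, mul_one_div_cancel hq', mul_one]; ring
      have hz2 : z.2 = g (-(q⁻¹ • p)) + ((q⁻¹ : ℚ) : ℝ) * y := by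
        rw [e2]; simp only [map_neg, map_smul]; push_cast
        rw [Rat.smul_def]; field_simp; rw [Rat.cast_div, Rat.cast_one, mul_assoc, mul_one_div_cancel hq', mul_one]; ring
      rw [← hz1, ← hz2]
      simpa using hz
  · intro h p q hmem
    rcases eq_or_ne q 0 with rfl | hq
    · exact hdisj p (by simpa using hmem)
    · apply h
      simp only [Set.mem_iUnion, Set.mem_image]
      have hq' : (q : ℝ) ≠ 0 := by exact_mod_cast hq
      refine ⟨-(q⁻¹ • p), q⁻¹, _, hmem, ?_⟩
      simp only [map_neg, map_smul, Prod.smul_mk, Prod.mk_add_mk, smul_eq_mul]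
      push_cast
      rw [Prod.ext_iff]
      simp only [Rat.smul_def]
      push_cast
      constructor <;> (field_simp; try ring)
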